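/- Let k be a field and let R be an integral domain that is essentially of finite type over k (i.e., R is a localization of a finitely generated k-algebra) with k ⊆ R. Then R is locally Egyptian. -/

import Mathlib

universe u

/-- A commutative ring `D` is *Egyptian* if every nonzero `d : D` is a sum of reciprocals
`d = 1/d₁ + ⋯ + 1/dₙ` of finitely many pairwise distinct nonzero elements `dᵢ` of `D`, the
equality holding in any field in which `D` embeds.  (For an integral domain `D` this is
equivalent to the usual definition, in which the equality is required in the fraction field
of `D`: such an equality holds in one field containing `D` iff it holds in all of them.) -/
def IsEgyptian (D : Type u) [CommRing D] : Prop :=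
  ∀ d : D, d ≠ 0 → ∃ s : Finset D, (∀ i ∈ s, i ≠ 0) ∧
    ∀ (K : Type u) [Field K] (φ : D →+* K), Function.Injective φ →
      φ d = ∑ i ∈ s, (φ i)⁻¹

/-- A domain `D` is *generically Egyptian* if `D[1/f]` is Egyptian for some nonzero `f : D`. -/
def IsGenericallyEgyptian (D : Type u) [CommRing D] : Prop :=
  ∃ f : D, f ≠ 0 ∧ IsEgyptian (Localization.Away f)

/-- A domain `D` is *locally Egyptian* if there is a finite set of generators of the unit
ideal of `D` such that inverting any one of them yields an Egyptian ring. -/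
def IsLocallyEgyptian (D : Type u) [CommRing D] : Prop :=
  ∃ s : Finset D, Ideal.span (s : Set D) = ⊤ ∧
    ∀ f ∈ s, IsEgyptian (Localization.Away f)

section Core

variable {D : Type u} [CommRing D] [IsDomain D]

private lemma iota_inj : Function.Injective (algebraMap D (FractionRing D)) :=
  IsFractionRing.injective D (FractionRing D)

private lemma iota_ne_zero {d : D} (hd : d ≠ 0) : algebraMap D (FractionRing D) d ≠ 0 :=
  fun h => hd (iota_inj (by simpa using h))

private lemma split_lemma (hU : {u : D | IsUnit u}.Infinite) {d : D} (hd : d ≠ 0) (B : Finset D) :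
    ∃ t : Finset D, (∀ i ∈ t, i ≠ 0 ∧ i ∉ B) ∧
      ∑ i ∈ t, (algebraMap D (FractionRing D) i)⁻¹ = (algebraMap D (FractionRing D) d)⁻¹ := by
  classical
  by_cases hdB : d ∈ B
  · set bad : Set D := {x : D | x = d ∨ x = -d ∨ (∃ b ∈ B, b - d = x) ∨
        ∃ b ∈ B, x * (b - d) = d * d} with hbaddef
    have hbadfin : bad.Finite := by
      have hsub : bad ⊆ ({d} : Set D) ∪ {-d} ∪ ((fun b => b - d) '' ↑B) ∪
          ⋃ b ∈ B, {x : D | x * (b - d) = d * d} := by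
        intro x hx
        simp only [hbaddef, Set.mem_setOf_eq] at hx
        rcases hx with h | h | ⟨b, hb, hbx⟩ | ⟨b, hb, hbx⟩
        · exact Or.inl (Or.inl (Or.inl h))
        · exact Or.inl (Or.inl (Or.inr h))
        · exact Or.inl (Or.inr ⟨b, hb, hbx⟩)
        · exact Or.inr (Set.mem_biUnion hb hbx)
      refine Set.Finite.subset ?_ hsub
      refine (((Set.finite_singleton d).union (Set.finite_singleton (-d))).union
        (B.finite_toSet.image _)).union ?_
      refine Set.Finite.biUnion B.finite_toSet (fun b _ => Set.Subsingleton.finite ?_)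
      intro x hx y hy
      simp only [Set.mem_setOf_eq] at hx hy
      rcases eq_or_ne b d with rfl | hbd
      · exfalso
        apply mul_ne_zero hd hd
        simpa using hx.symm
      · exact mul_right_cancel₀ (sub_ne_zero.mpr hbd) (hx.trans hy.symm)
    obtain ⟨v, hvU, hvbad⟩ := hU.exists_notMem_finite hbadfin
    obtain ⟨u, rfl⟩ := hvU
    have hu : ¬ (((u : D) = d ∨ (u : D) = -d ∨ (∃ b ∈ B, b - d = (u : D)) ∨
        ∃ b ∈ B, (u : D) * (b - d) = d * d)) := hvbad
    push_neg at hu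
    obtain ⟨hu1, hu2, hu3, hu4⟩ := hu
    set a : D := d + (u : D) with ha
    set e : D := ((u⁻¹ : Dˣ) : D) * (d * a) with he
    have ha0 : a ≠ 0 := by
      intro h
      exact hu2 (eq_neg_of_add_eq_zero_right h)
    have haB : a ∉ B := by
      intro h
      exact hu3 a h (by rw [ha]; ring)
    have he0 : e ≠ 0 := mul_ne_zero (Units.ne_zero _) (mul_ne_zero hd ha0)
    have heB : e ∉ B := by
      intro h
      apply hu4 e h
      rw [he, ha]
      linear_combination (d * (d + (u:D))) * u.mul_inv
    have hea : e ≠ a := by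
      intro h
      have h3 : d * a = (u : D) * a := by
        rw [he] at h
        linear_combination (u : D) * h - d * a * u.mul_inv
      exact hu1 ((mul_right_cancel₀ ha0 h3).symm)
    refine ⟨{a, e}, ?_, ?_⟩
    · intro i hi
      rcases Finset.mem_insert.mp hi with rfl | hi
      · exact ⟨ha0, haB⟩
      · rw [Finset.mem_singleton] at hi
        subst hi
        exact ⟨he0, heB⟩
    · rw [Finset.sum_pair (Ne.symm hea)]
      have hinv : algebraMap D (FractionRing D) ((u⁻¹ : Dˣ) : D)
          = (algebraMap D (FractionRing D) (u : D))⁻¹ := by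
        apply eq_inv_of_mul_eq_one_left
        rw [← map_mul, u.inv_mul, map_one]
      have hee : algebraMap D (FractionRing D) e
          = (algebraMap D (FractionRing D) (u : D))⁻¹ *
            (algebraMap D (FractionRing D) d * algebraMap D (FractionRing D) a) := by
        rw [he, map_mul, map_mul, hinv]
      have haa : algebraMap D (FractionRing D) a
          = algebraMap D (FractionRing D) d + algebraMap D (FractionRing D) (u : D) := by
        rw [ha, map_add]
      have h1 : algebraMap D (FractionRing D) d ≠ 0 := iota_ne_zero hd
      have h4 : algebraMap D (FractionRing D) (u : D) ≠ 0 := iota_ne_zero (Units.ne_zero u)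
      have h2 : algebraMap D (FractionRing D) d + algebraMap D (FractionRing D) (u : D) ≠ 0 := by
        rw [← haa]; exact iota_ne_zero ha0
      rw [hee, haa]
      field_simp
  · exact ⟨{d}, by simp [hd, hdB], by simp⟩

private lemma multirep (hU : {u : D | IsUnit u}.Infinite) (L : Multiset D)
    (hL : ∀ x ∈ L, x ≠ 0) (B : Finset D) :
    ∃ t : Finset D, (∀ i ∈ t, i ≠ 0 ∧ i ∉ B) ∧
      ∑ i ∈ t, (algebraMap D (FractionRing D) i)⁻¹
        = (L.map fun i => (algebraMap D (FractionRing D) i)⁻¹).sum := by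
  classical
  induction L using Multiset.induction generalizing B with
  | empty => exact ⟨∅, by simp, by simp⟩
  | cons d L ih =>
    obtain ⟨t', ht', hs'⟩ := ih (fun x hx => hL x (Multiset.mem_cons_of_mem hx)) B
    obtain ⟨t, ht, hs⟩ := split_lemma hU (hL d (Multiset.mem_cons_self d L)) (B ∪ t')
    have hdisj : Disjoint t t' := by
      rw [Finset.disjoint_left]
      intro i hi hit'
      exact (ht i hi).2 (Finset.mem_union_right _ hit')
    refine ⟨t ∪ t', ?_, ?_⟩
    · intro i hi
      rcases Finset.mem_union.mp hi with hi | hi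
      · exact ⟨(ht i hi).1, fun h => (ht i hi).2 (Finset.mem_union_left _ h)⟩
      · exact ht' i hi
    · rw [Finset.sum_union hdisj, Multiset.map_cons, Multiset.sum_cons, hs, hs']

private lemma multiset_sum_map_neg {β : Type*} {α : Type*} [AddCommGroup α] (M : Multiset β)
    (f : β → α) : (M.map (fun i => -(f i))).sum = -(M.map f).sum := by
  induction M using Multiset.induction with
  | empty => simp
  | cons a s ih => simp [ih]; abel

private lemma toprep (hcl : Subring.closure {u : D | IsUnit u} = ⊤) (d : D) :
    ∃ L : Multiset D, (∀ x ∈ L, x ≠ 0) ∧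
      algebraMap D (FractionRing D) d = (L.map fun i => (algebraMap D (FractionRing D) i)⁻¹).sum := by
  have hd : d ∈ Subring.closure {u : D | IsUnit u} := by rw [hcl]; trivial
  induction hd using Subring.closure_induction with
  | mem x hx =>
    obtain ⟨u, rfl⟩ := hx
    refine ⟨{((u⁻¹ : Dˣ) : D)}, by simp, ?_⟩
    have : algebraMap D (FractionRing D) ((u⁻¹ : Dˣ) : D)
        = (algebraMap D (FractionRing D) (u : D))⁻¹ := by
      apply eq_inv_of_mul_eq_one_left
      rw [← map_mul, u.inv_mul, map_one]
    simp [this]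
  | zero => exact ⟨0, by simp, by simp⟩
  | one => exact ⟨{1}, by simp, by simp⟩
  | add x y hx hy ihx ihy =>
    obtain ⟨L₁, h₁, e₁⟩ := ihx
    obtain ⟨L₂, h₂, e₂⟩ := ihy
    refine ⟨L₁ + L₂, ?_, ?_⟩
    · intro z hz
      rcases Multiset.mem_add.mp hz with hz | hz
      · exact h₁ z hz
      · exact h₂ z hz
    · rw [map_add, e₁, e₂, Multiset.map_add, Multiset.sum_add]
  | neg x hx ihx =>
    obtain ⟨L, h₁, e₁⟩ := ihx
    refine ⟨L.map (fun i => -i), ?_, ?_⟩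
    · intro z hz
      obtain ⟨w, hw, rfl⟩ := Multiset.mem_map.mp hz
      exact neg_ne_zero.mpr (h₁ w hw)
    · rw [map_neg, e₁, Multiset.map_map]
      have hpt : ∀ z ∈ L, ((fun i => ((algebraMap D (FractionRing D)) i)⁻¹) ∘ fun i => -i) z
          = -(((algebraMap D (FractionRing D)) z)⁻¹) := by
        intro z _
        simp [inv_neg]
      rw [Multiset.map_congr rfl hpt, multiset_sum_map_neg]
  | mul x y hx hy ihx ihy =>
    obtain ⟨L₁, h₁, e₁⟩ := ihx
    obtain ⟨L₂, h₂, e₂⟩ := ihy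
    clear hx hy
    rw [map_mul, e₁, e₂]
    clear e₁ e₂
    induction L₁ using Multiset.induction with
    | empty => exact ⟨0, by simp, by simp⟩
    | cons c L ih =>
      obtain ⟨L', hL', eL'⟩ := ih (fun z hz => h₁ z (Multiset.mem_cons_of_mem hz))
      refine ⟨L₂.map (fun b => c * b) + L', ?_, ?_⟩
      · intro z hz
        rcases Multiset.mem_add.mp hz with hz | hz
        · obtain ⟨w, hw, rfl⟩ := Multiset.mem_map.mp hz
          exact mul_ne_zero (h₁ c (Multiset.mem_cons_self c L)) (h₂ w hw)
        · exact hL' z hz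
      · rw [Multiset.map_cons, Multiset.sum_cons, add_mul, Multiset.map_add, Multiset.sum_add,
          ← eL', Multiset.map_map]
        congr 1
        rw [← Multiset.sum_map_mul_left]
        refine congrArg Multiset.sum ?_
        refine Multiset.map_congr rfl ?_
        intro z _
        simp [map_mul, mul_inv, Function.comp, mul_comm]

private lemma isEgyptian_of_closure_infinite (hcl : Subring.closure {u : D | IsUnit u} = ⊤)
    (hU : {u : D | IsUnit u}.Infinite) : IsEgyptian D := by
  intro d hd
  obtain ⟨L, hL, e⟩ := toprep hcl d
  obtain ⟨t, ht, hts⟩ := multirep hU L hL ∅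
  refine ⟨t, fun i hi => (ht i hi).1, ?_⟩
  intro K _ φ hφ
  have key : algebraMap D (FractionRing D) d = ∑ i ∈ t, (algebraMap D (FractionRing D) i)⁻¹ := by
    rw [e, hts]
  let ψ : FractionRing D →+* K := IsFractionRing.lift hφ
  have hψ : ∀ x : D, ψ (algebraMap D (FractionRing D) x) = φ x := fun x =>
    IsFractionRing.lift_algebraMap hφ x
  calc φ d = ψ (algebraMap D (FractionRing D) d) := (hψ d).symm
    _ = ψ (∑ i ∈ t, (algebraMap D (FractionRing D) i)⁻¹) := by rw [key]
    _ = ∑ i ∈ t, ψ ((algebraMap D (FractionRing D) i)⁻¹) := map_sum ψ _ t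
    _ = ∑ i ∈ t, (φ i)⁻¹ := by
        apply Finset.sum_congr rfl
        intro i _
        rw [map_inv₀, hψ i]

end Core

lemma isEgyptian_of_isField {D : Type u} [CommRing D] (h : IsField D) : IsEgyptian D := by
  intro d hd
  haveI : Nontrivial D := ⟨h.exists_pair_ne⟩
  obtain ⟨b, hb⟩ := h.mul_inv_cancel hd
  have hb0 : b ≠ 0 := by
    rintro rfl
    rw [mul_zero] at hb
    exact zero_ne_one hb
  refine ⟨{b}, ?_, ?_⟩
  · intro i hi
    rw [Finset.mem_singleton] at hi
    subst hi
    exact hb0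
  · intro K _ φ _
    rw [Finset.sum_singleton]
    apply eq_inv_of_mul_eq_one_right
    rw [← map_mul, mul_comm, hb, map_one]

lemma isEgyptian_of_closure_units (k : Type*) [Field k] {D : Type u} [CommRing D] [IsDomain D]
    [Algebra k D] (hcl : Subring.closure {u : D | IsUnit u} = ⊤) : IsEgyptian D := by
  by_cases hU : {u : D | IsUnit u}.Infinite
  · exact isEgyptian_of_closure_infinite hcl hU
  · rw [Set.not_infinite] at hU
    have hinj : Function.Injective (algebraMap k D) := (algebraMap k D).injective
    have hkfin : Finite k := by
      have h1 : (Set.range (algebraMap k D)).Finite := by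
        apply (hU.insert 0).subset
        rintro _ ⟨c, rfl⟩
        rcases eq_or_ne c 0 with rfl | hc
        · simp
        · exact Set.mem_insert_of_mem _ ((isUnit_iff_ne_zero.mpr hc).map (algebraMap k D))
      have h2 : (Set.univ : Set k).Finite := by
        apply (Set.Finite.preimage hinj.injOn h1).subset
        intro c _
        exact ⟨c, rfl⟩
      exact Set.finite_univ_iff.mp h2
    have hadj : Algebra.adjoin k {u : D | IsUnit u} = ⊤ := by
      rw [eq_top_iff]
      intro x _
      have hx : x ∈ Subring.closure {u : D | IsUnit u} := by rw [hcl]; trivial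
      have hle : Subring.closure {u : D | IsUnit u} ≤
          Subalgebra.toSubring (Algebra.adjoin k {u : D | IsUnit u}) :=
        Subring.closure_le.mpr (Algebra.subset_adjoin)
      exact hle hx
    have hsm : Submonoid.closure {u : D | IsUnit u} = IsUnit.submonoid D := by
      rw [show {u : D | IsUnit u} = ((IsUnit.submonoid D : Submonoid D) : Set D) from rfl]
      exact Submonoid.closure_eq _
    have hspan : Submodule.span k {u : D | IsUnit u} = ⊤ := by
      have h3 := Algebra.adjoin_eq_span (R := k) (s := {u : D | IsUnit u})
      rw [hadj, hsm] at h3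
      have : Submodule.span k ((IsUnit.submonoid D : Submonoid D) : Set D)
          = Submodule.span k {u : D | IsUnit u} := rfl
      rw [this] at h3
      rw [← h3]
      rfl
    haveI : Module.Finite k D := ⟨by
      rw [← hspan]
      exact Submodule.fg_def.mpr ⟨_, hU, rfl⟩⟩
    haveI : Finite D := Module.finite_of_finite k
    exact isEgyptian_of_isField (Finite.isField_of_domain D)

lemma exists_good (k : Type*) [Field k] (R : Type u) [CommRing R] [IsDomain R]
    [Algebra k R] [Algebra.EssFiniteType k R] (m : Ideal R) [hmax : m.IsMaximal] :
    ∃ f : R, f ∉ m ∧ IsEgyptian (Localization.Away f) := by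
  classical
  obtain ⟨σ, hσ⟩ := (Algebra.essFiniteType_iff k R).mp inferInstance
  haveI := hmax.isPrime
  set c : R → R := fun a => if a ∈ m then 1 else 0 with hc
  set f : R := ∏ a ∈ σ, (a - c a) with hf
  have hfac : ∀ a ∈ σ, a - c a ∉ m := by
    intro a _
    by_cases ham : a ∈ m
    · simp only [hc, if_pos ham]
      intro h
      have h1 : (1 : R) ∈ m := by
        have := m.sub_mem ham h
        simpa using this
      exact hmax.ne_top ((Ideal.eq_top_iff_one m).mpr h1)
    · simpa [hc, if_neg ham] using ham
  have hfm : f ∉ m := by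
    intro h
    rw [hf] at h
    obtain ⟨a, ha, ha2⟩ := (Ideal.IsPrime.prod_mem_iff).mp h
    exact hfac a ha ha2
  have hf0 : f ≠ 0 := fun h => hfm (h ▸ m.zero_mem)
  haveI : IsDomain (Localization.Away f) :=
    IsLocalization.isDomain_localization (powers_le_nonZeroDivisors_of_noZeroDivisors hf0)
  letI : Algebra k (Localization.Away f) :=
    ((algebraMap R (Localization.Away f)).comp (algebraMap k R)).toAlgebra
  refine ⟨f, hfm, ?_⟩
  apply isEgyptian_of_closure_units k
  rw [eq_top_iff]
  rintro x -
  have hfu : IsUnit (algebraMap R (Localization.Away f) f) :=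
    IsLocalization.map_units (Localization.Away f)
      (⟨f, Submonoid.mem_powers f⟩ : Submonoid.powers f)
  have stepA : ∀ r ∈ Algebra.adjoin k (σ : Set R),
      (algebraMap R (Localization.Away f)) r ∈
        Subring.closure {u : Localization.Away f | IsUnit u} := by
    intro r hr
    induction hr using Algebra.adjoin_induction with
    | mem a ha =>
        have h1 : IsUnit ((algebraMap R (Localization.Away f)) (a - c a)) := by
          refine isUnit_of_dvd_unit ?_ hfu
          exact map_dvd _ (hf ▸ Finset.dvd_prod_of_mem _ ha)
        have h2 : (algebraMap R (Localization.Away f)) a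
            = (algebraMap R (Localization.Away f)) (a - c a)
              + (algebraMap R (Localization.Away f)) (c a) := by
          rw [← map_add]
          congr 1
          ring
        rw [h2]
        refine Subring.add_mem _ (Subring.subset_closure h1) ?_
        by_cases ham : a ∈ m
        · simp only [hc, if_pos ham, map_one]
          exact Subring.one_mem _
        · simp only [hc, if_neg ham, map_zero]
          exact Subring.zero_mem _
    | algebraMap w =>
        rcases eq_or_ne w 0 with rfl | hw
        · simp only [map_zero]
          exact Subring.zero_mem _
        · refine Subring.subset_closure ?_
          exact (isUnit_iff_ne_zero.mpr hw).map
            ((algebraMap R (Localization.Away f)).comp (algebraMap k R))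
    | add x y hx hy ihx ihy =>
        rw [map_add]; exact Subring.add_mem _ ihx ihy
    | mul x y hx hy ihx ihy =>
        rw [map_mul]; exact Subring.mul_mem _ ihx ihy
  have stepB : ∀ r : R, (algebraMap R (Localization.Away f)) r ∈
      Subring.closure {u : Localization.Away f | IsUnit u} := by
    intro r
    obtain ⟨t, ht, htu, hrt⟩ := hσ r
    have h1 : IsUnit ((algebraMap R (Localization.Away f)) t) := htu.map _
    have h2 : (algebraMap R (Localization.Away f)) r
        = (algebraMap R (Localization.Away f)) (r * t) * ((h1.unit⁻¹ : _ˣ) : _) := by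
      rw [map_mul, mul_assoc, h1.mul_val_inv, mul_one]
    rw [h2]
    exact Subring.mul_mem _ (stepA _ hrt) (Subring.subset_closure (h1.unit⁻¹).isUnit)
  obtain ⟨⟨r, s⟩, hx⟩ := IsLocalization.surj (Submonoid.powers f) x
  have hsu : IsUnit ((algebraMap R (Localization.Away f)) (s : R)) :=
    IsLocalization.map_units (Localization.Away f) s
  have h2 : x = (algebraMap R (Localization.Away f)) r * ((hsu.unit⁻¹ : _ˣ) : _) := by
    rw [← hx, mul_assoc, hsu.mul_val_inv, mul_one]
  rw [h2]
  exact Subring.mul_mem _ (stepB r) (Subring.subset_closure (hsu.unit⁻¹).isUnit)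

/-- If `k` is a field and `R` is an integral domain containing `k` that is essentially of
finite type over `k` (a localization of a finitely generated `k`-algebra), then `R` is
locally Egyptian. -/
theorem statement11 (k : Type*) [Field k] (R : Type u) [CommRing R] [IsDomain R]
    [Algebra k R] [Algebra.EssFiniteType k R] :
    IsLocallyEgyptian R := by
  classical
  set G : Set R := {f : R | IsEgyptian (Localization.Away f)} with hG
  have hspan : Ideal.span G = ⊤ := by
    by_contra h
    obtain ⟨m, hm, hle⟩ := Ideal.exists_le_maximal _ h
    haveI := hm
    obtain ⟨f, hfm, hfe⟩ := exists_good k R m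
    exact hfm (hle (Ideal.subset_span hfe))
  have h1 : (1 : R) ∈ Ideal.span G := by rw [hspan]; trivial
  obtain ⟨t, htG, ht1⟩ := Submodule.mem_span_finite_of_mem_span h1
  exact ⟨t, (Ideal.eq_top_iff_one _).mpr ht1, fun f hf => htG hf⟩
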